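/- Let G be a finite simple graph on a nonempty finite vertex set V with minimum adjacency eigenvalue λ₀, and let p : V → ℕ with p(v) ≥ 1 for all v; write P = max_v p(v) and q = min_v p(v), and assume λ₀ + q − P/q ≥ 0. Let H = G(p) be the graph obtained from G by attaching p(v) new pendant vertices to each vertex v. Then the minimum eigenvalue λ of the adjacency matrix of H satisfies −λ ≤ q. -/

import Mathlib

/-- The pendant extension `G(p)` of a graph `G`: to each vertex `v` of `G` we attach
`p v` new pendant vertices. Its vertex set is `V ⊕ Σ v, Fin (p v)`; two original vertices
are adjacent iff they are adjacent in `G`, a pendant vertex `(v, j)` is adjacent exactly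
to `v`, and pendant vertices are pairwise nonadjacent. -/
def SimpleGraph.pendantExtension {V : Type*} (G : SimpleGraph V) (p : V → ℕ) :
    SimpleGraph (V ⊕ Σ v : V, Fin (p v)) where
  Adj u w := match u, w with
    | Sum.inl a, Sum.inl b => G.Adj a b
    | Sum.inl a, Sum.inr ⟨b, _⟩ => a = b
    | Sum.inr ⟨a, _⟩, Sum.inl b => a = b
    | Sum.inr _, Sum.inr _ => False
  symm := ⟨by
    rintro (a | ⟨a, j⟩) (b | ⟨b, i⟩) h
    · exact G.adj_symm h
    · exact h.symm
    · exact h.symm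
    · exact h.elim⟩
  loopless := ⟨by
    rintro (a | ⟨a, j⟩) h
    · exact G.irrefl h
    · exact h.elim⟩

instance {V : Type*} [DecidableEq V] (G : SimpleGraph V) [DecidableRel G.Adj] (p : V → ℕ) :
    DecidableRel (G.pendantExtension p).Adj := fun u w =>
  match u, w with
  | Sum.inl a, Sum.inl b => inferInstanceAs (Decidable (G.Adj a b))
  | Sum.inl a, Sum.inr ⟨b, _⟩ => inferInstanceAs (Decidable (a = b))
  | Sum.inr ⟨a, _⟩, Sum.inl b => inferInstanceAs (Decidable (a = b))
  | Sum.inr _, Sum.inr _ => inferInstanceAs (Decidable False)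


open Matrix in
private lemma auxPend_exists_eigenvector {n : Type*} [Fintype n] [DecidableEq n]
    (M : Matrix n n ℝ) {μ : ℝ} (h : μ ∈ spectrum ℝ M) :
    ∃ x : n → ℝ, x ≠ 0 ∧ M *ᵥ x = μ • x := by
  have h' : μ ∈ spectrum ℝ (Matrix.toLinAlgEquiv' M) := by
    rwa [AlgEquiv.spectrum_eq]
  obtain ⟨v, hv⟩ := (Module.End.hasEigenvalue_iff_mem_spectrum.mpr h').exists_hasEigenvector
  refine ⟨v, hv.2, ?_⟩
  have := hv.apply_eq_smul
  rwa [Matrix.toLinAlgEquiv'_apply] at this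

open Matrix in
private lemma auxPend_quad_lb {n : Type*} [Fintype n] [DecidableEq n] (M : Matrix n n ℝ)
    (hM : M.IsHermitian) {l : ℝ} (hl : ∀ a ∈ spectrum ℝ M, l ≤ a) (x : n → ℝ) :
    l * (x ⬝ᵥ x) ≤ x ⬝ᵥ M *ᵥ x := by
  set B := M - algebraMap ℝ (Matrix n n ℝ) l with hB
  have hBh : B.IsHermitian := by
    refine hM.sub ?_
    simp [Matrix.algebraMap_eq_diagonal, Matrix.IsHermitian, Matrix.diagonal_conjTranspose]
  have hpsd : B.PosSemidef := by
    apply hBh.posSemidef_iff_eigenvalues_nonneg.mpr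
    intro i
    have hmem : hBh.eigenvalues i ∈ spectrum ℝ B := hBh.eigenvalues_mem_spectrum_real i
    rw [← spectrum.sub_singleton_eq] at hmem
    obtain ⟨a, ha, b, hb, hab⟩ := Set.mem_sub.mp hmem
    rw [Set.mem_singleton_iff] at hb
    subst hb
    rw [← hab]
    exact sub_nonneg.mpr (hl a ha)
  have h0 := hpsd.dotProduct_mulVec_nonneg x
  simp only [RCLike.re_to_real, star_trivial] at h0
  have : x ⬝ᵥ B *ᵥ x = x ⬝ᵥ M *ᵥ x - l * (x ⬝ᵥ x) := by
    rw [hB, Matrix.sub_mulVec, dotProduct_sub, Matrix.algebraMap_eq_diagonal]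
    congr 1
    simp only [Matrix.mulVec, dotProduct, Matrix.diagonal_apply, Pi.algebraMap_apply,
      Algebra.algebraMap_self_apply, Finset.mul_sum]
    rw [Finset.sum_congr rfl]
    intro i _
    rw [Finset.sum_eq_single i] <;> simp +contextual [mul_comm, mul_left_comm, eq_comm]
  linarith [this ▸ h0]

open Matrix in
private lemma auxPend_quad_split {V : Type*} [Fintype V] [DecidableEq V]
    (G : SimpleGraph V) [DecidableRel G.Adj]
    (p : V → ℕ) (x : (V ⊕ Σ v : V, Fin (p v)) → ℝ) :
    x ⬝ᵥ ((G.pendantExtension p).adjMatrix ℝ) *ᵥ x =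
      (fun a => x (Sum.inl a)) ⬝ᵥ (G.adjMatrix ℝ) *ᵥ (fun a => x (Sum.inl a))
      + 2 * ∑ v : V, ∑ j : Fin (p v), x (Sum.inl v) * x (Sum.inr ⟨v, j⟩) := by
  have e1 : ∀ a b : V, (G.pendantExtension p).Adj (Sum.inl a) (Sum.inl b) ↔ G.Adj a b :=
    fun _ _ => Iff.rfl
  have e2 : ∀ (a b : V) (j : Fin (p b)), (G.pendantExtension p).Adj (Sum.inl a) (Sum.inr ⟨b, j⟩) ↔ a = b :=
    fun _ _ _ => Iff.rfl
  have e3 : ∀ (a b : V) (j : Fin (p b)), (G.pendantExtension p).Adj (Sum.inr ⟨b, j⟩) (Sum.inl a) ↔ b = a :=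
    fun _ _ _ => Iff.rfl
  have e4 : ∀ (a b : V) (i : Fin (p a)) (j : Fin (p b)),
      (G.pendantExtension p).Adj (Sum.inr ⟨a, i⟩) (Sum.inr ⟨b, j⟩) ↔ False :=
    fun _ _ _ _ => Iff.rfl
  simp only [dotProduct, Matrix.mulVec, SimpleGraph.adjMatrix_apply, e1, e2, e3, e4,
    Fintype.sum_sum_type, ← Finset.univ_sigma_univ, Finset.sum_sigma]
  simp only [if_false, mul_ite, mul_one, mul_zero, Finset.sum_const_zero, add_zero,
    Finset.sum_ite_eq, Finset.sum_ite_eq', Finset.mem_univ, if_true, mul_add, Finset.sum_add_distrib,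
    ite_mul, one_mul, zero_mul, Finset.mul_sum]
  rw [add_assoc]
  congr 1
  rw [← Finset.sum_add_distrib]
  refine Finset.sum_congr rfl fun a _ => ?_
  rw [Finset.sum_eq_single a (fun b _ hb => Finset.sum_eq_zero fun j _ => if_neg (Ne.symm hb))
    (by simp), ← Finset.sum_add_distrib]
  refine Finset.sum_congr rfl fun j _ => ?_
  rw [if_pos rfl]
  ring

open Matrix in
private lemma auxPend_norm_split {V : Type*} [Fintype V] [DecidableEq V]
    (p : V → ℕ) (x : (V ⊕ Σ v : V, Fin (p v)) → ℝ) :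
    x ⬝ᵥ x = (fun a => x (Sum.inl a)) ⬝ᵥ (fun a => x (Sum.inl a))
      + ∑ v : V, ∑ j : Fin (p v), x (Sum.inr ⟨v, j⟩) * x (Sum.inr ⟨v, j⟩) := by
  simp only [dotProduct, Fintype.sum_sum_type, ← Finset.univ_sigma_univ,
    Finset.sum_sigma]

/-- **Example 4.1** (spectral part). Let `G` be a graph with minimum adjacency eigenvalue
`λ₀`, let `p : V → ℕ` with `p v ≥ 1` for every `v`, let `P` and `q` be the maximum and
minimum of `p`, and assume `λ₀ + q − P/q ≥ 0`. Then the minimum adjacency eigenvalue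
`lam` of the pendant extension `H = G(p)` satisfies `−lam ≤ q`. -/
theorem min_eigenvalue_pendantExtension
    {V : Type*} [Fintype V] [Nonempty V] [DecidableEq V]
    (G : SimpleGraph V) [DecidableRel G.Adj]
    (p : V → ℕ) (hp : ∀ v, 1 ≤ p v)
    (P q : ℕ) (hP : IsGreatest (Set.range p) P) (hq : IsLeast (Set.range p) q)
    (lam0 : ℝ) (hlam0 : IsLeast (spectrum ℝ (G.adjMatrix ℝ)) lam0)
    (hcond : 0 ≤ lam0 + (q : ℝ) - (P : ℝ) / (q : ℝ))
    (lam : ℝ)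
    (hlam : IsLeast (spectrum ℝ ((G.pendantExtension p).adjMatrix ℝ)) lam) :
    -lam ≤ (q : ℝ) := by
  classical
  open Matrix in
  obtain ⟨x, hx0, hx⟩ := auxPend_exists_eigenvector _ hlam.1
  set y : V → ℝ := fun a => x (Sum.inl a) with hy
  have hq1 : (1 : ℕ) ≤ q := by
    obtain ⟨v, hv⟩ := hq.1
    exact hv ▸ hp v
  have hq0 : (0 : ℝ) < (q : ℝ) := by exact_mod_cast hq1
  have hxsq : (0:ℝ) ≤ x ⬝ᵥ x := Finset.sum_nonneg fun i _ => mul_self_nonneg _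
  have hxx : (0:ℝ) < x ⬝ᵥ x := by
    rcases hxsq.lt_or_eq with h | h
    · exact h
    · exact absurd (dotProduct_self_eq_zero.mp h.symm) hx0
  -- quadratic form of G bounded below
  have h1 : lam0 * (y ⬝ᵥ y) ≤ y ⬝ᵥ (G.adjMatrix ℝ) *ᵥ y :=
    auxPend_quad_lb _ (by
      show (G.adjMatrix ℝ)ᴴ = G.adjMatrix ℝ
      rw [Matrix.conjTranspose_eq_transpose_of_trivial]
      exact G.isSymm_adjMatrix) (fun a ha => hlam0.2 ha) y
  -- pendant part bound
  have h2 : ∀ v : V, -((P:ℝ)/q) * (y v * y v) ≤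
      ∑ j : Fin (p v), (2 * (x (Sum.inl v) * x (Sum.inr ⟨v, j⟩))
        + (q:ℝ) * (x (Sum.inr ⟨v, j⟩) * x (Sum.inr ⟨v, j⟩))) := by
    intro v
    have hstep : ∀ j : Fin (p v), -(y v * y v) / q ≤
        2 * (x (Sum.inl v) * x (Sum.inr ⟨v, j⟩))
        + (q:ℝ) * (x (Sum.inr ⟨v, j⟩) * x (Sum.inr ⟨v, j⟩)) := by
      intro j
      rw [div_le_iff₀ hq0] at *
      nlinarith [sq_nonneg ((q:ℝ) * x (Sum.inr ⟨v, j⟩) + x (Sum.inl v)), hq0]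
    calc -((P:ℝ)/q) * (y v * y v) ≤ (p v : ℝ) * (-(y v * y v) / q) := by
          have hPv : (p v : ℝ) ≤ (P : ℝ) := by exact_mod_cast hP.2 ⟨v, rfl⟩
          rw [show -((P:ℝ)/↑q) * (y v * y v) = -(↑P * (y v * y v)) / ↑q from by ring,
            show ((p v : ℝ)) * (-(y v * y v) / ↑q) = -(↑(p v) * (y v * y v)) / ↑q from by ring,
            div_le_div_iff_of_pos_right hq0]
          nlinarith [mul_self_nonneg (y v)]
      _ = ∑ _j : Fin (p v), (-(y v * y v) / q) := by
          simp [Finset.sum_const, mul_comm]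
      _ ≤ _ := Finset.sum_le_sum fun j _ => hstep j
  -- assemble
  have hid := auxPend_quad_split G p x
  have hnm := auxPend_norm_split p x
  have h3 : -((P:ℝ)/q) * (y ⬝ᵥ y) ≤
      2 * (∑ v : V, ∑ j : Fin (p v), x (Sum.inl v) * x (Sum.inr ⟨v, j⟩))
      + (q:ℝ) * ∑ v : V, ∑ j : Fin (p v), x (Sum.inr ⟨v, j⟩) * x (Sum.inr ⟨v, j⟩) := by
    have : 2 * (∑ v : V, ∑ j : Fin (p v), x (Sum.inl v) * x (Sum.inr ⟨v, j⟩))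
        + (q:ℝ) * ∑ v : V, ∑ j : Fin (p v), x (Sum.inr ⟨v, j⟩) * x (Sum.inr ⟨v, j⟩)
        = ∑ v : V, ∑ j : Fin (p v), (2 * (x (Sum.inl v) * x (Sum.inr ⟨v, j⟩))
          + (q:ℝ) * (x (Sum.inr ⟨v, j⟩) * x (Sum.inr ⟨v, j⟩))) := by
      simp [Finset.mul_sum, Finset.sum_add_distrib]
    rw [this]
    have : -((P:ℝ)/q) * (y ⬝ᵥ y) = ∑ v : V, -((P:ℝ)/q) * (y v * y v) := by
      simp [dotProduct, Finset.mul_sum]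
    rw [this]
    exact Finset.sum_le_sum fun v _ => h2 v
  have hysq : (0:ℝ) ≤ y ⬝ᵥ y := Finset.sum_nonneg fun i _ => mul_self_nonneg _
  have hcond' : 0 ≤ (lam0 + (q:ℝ) - (P:ℝ)/q) * (y ⬝ᵥ y) := mul_nonneg hcond hysq
  -- x ⬝ᵥ A x = lam * (x ⬝ᵥ x)
  have heig : x ⬝ᵥ ((G.pendantExtension p).adjMatrix ℝ) *ᵥ x = lam * (x ⬝ᵥ x) := by
    rw [hx, dotProduct_smul, smul_eq_mul]
  have key : -(q:ℝ) * (x ⬝ᵥ x) ≤ lam * (x ⬝ᵥ x) := by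
    rw [← heig, hid, hnm]
    nlinarith [h1, h3, hcond']
  have : -(q:ℝ) ≤ lam := le_of_mul_le_mul_right (by linarith [key]) hxx
  linarith
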